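/- Let G be a thin connected finite digraph and v a vertex of G. Then any two vertices of S⁺(v) lie in the same connected component of the Cartesian skeleton 𝕊(G); that is, any two vertices x, y ∈ S⁺(v) are joined by a walk in the underlying undirected graph of 𝕊(G). The same holds for any two vertices of S⁻(v). -/

import Mathlib

/-- Closed out-neighborhood `N⁺[v] = {v} ∪ {x : vx ∈ E}`. -/
def Nout {V : Type*} (E : V → V → Prop) (v : V) : Set V := insert v {x | E v x}

/-- Closed in-neighborhood `N⁻[v] = {v} ∪ {x : xv ∈ E}`. -/
def Nin {V : Type*} (E : V → V → Prop) (v : V) : Set V := insert v {x | E x v}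

/-- Condition (3) for a family of closed neighborhoods `N`:
`N[x] ∩ N[y] ⊊ N[x] ∩ N[z]` and `N[x] ∩ N[y] ⊊ N[y] ∩ N[z]`. -/
def NCond3 {V : Type*} (N : V → Set V) (x y z : V) : Prop :=
  N x ∩ N y ⊂ N x ∩ N z ∧ N x ∩ N y ⊂ N y ∩ N z

/-- The N-condition for a family of closed neighborhoods `N`: one of
(1) `N[x] ⊊ N[z] ⊊ N[y]`, (2) `N[y] ⊊ N[z] ⊊ N[x]`, or (3) `NCond3`. -/
def NCond {V : Type*} (N : V → Set V) (x y z : V) : Prop :=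
  (N x ⊂ N z ∧ N z ⊂ N y) ∨ (N y ⊂ N z ∧ N z ⊂ N x) ∨ NCond3 N x y z

/-- The weak N-condition: `N[x] ∩ N[y] ⊆ N[x] ∩ N[z]` and `N[x] ∩ N[y] ⊆ N[y] ∩ N[z]`. -/
def WeakNCond {V : Type*} (N : V → Set V) (x y z : V) : Prop :=
  N x ∩ N y ⊆ N x ∩ N z ∧ N x ∩ N y ⊆ N y ∩ N z

/-- Dispensability condition (D1): some `z` satisfies both the `N⁺`- and the
`N⁻`-condition with `xy`. -/
def D1 {V : Type*} (E : V → V → Prop) (x y : V) : Prop :=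
  ∃ z : V, NCond (Nout E) x y z ∧ NCond (Nin E) x y z

/-- Dispensability condition (D2). -/
def D2 {V : Type*} (E : V → V → Prop) (x y : V) : Prop :=
  ∃ z₁ z₂ : V, (NCond3 (Nout E) x y z₁ ∧ WeakNCond (Nin E) x y z₁) ∧
    (NCond3 (Nin E) x y z₂ ∧ WeakNCond (Nout E) x y z₂)

/-- Dispensability condition (D3). -/
def D3 {V : Type*} (E : V → V → Prop) (x y : V) : Prop :=
  ∃ z : V, NCond (Nout E) x y z ∧ (Nin E x = Nin E z ∨ Nin E y = Nin E z)

/-- Dispensability condition (D4). -/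
def D4 {V : Type*} (E : V → V → Prop) (x y : V) : Prop :=
  ∃ z : V, NCond (Nin E) x y z ∧ (Nout E x = Nout E z ∨ Nout E y = Nout E z)

/-- Dispensability condition (D5). -/
def D5 {V : Type*} (E : V → V → Prop) (x y : V) : Prop :=
  ∃ z₁ z₂ : V, z₁ ≠ z₂ ∧ z₁ ≠ x ∧ z₁ ≠ y ∧ z₂ ≠ x ∧ z₂ ≠ y ∧
    Nout E x = Nout E z₁ ∧ Nin E x = Nin E z₂ ∧ Nin E z₁ = Nin E y ∧ Nout E z₂ = Nout E y

/-- An arc `xy` is dispensable if one of (D1)–(D5) holds. -/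
def Dispensable {V : Type*} (E : V → V → Prop) (x y : V) : Prop :=
  D1 E x y ∨ D2 E x y ∨ D3 E x y ∨ D4 E x y ∨ D5 E x y

/-- Arc relation of the Cartesian skeleton `𝕊(G)`: the non-dispensable arcs of `G`. -/
def SkelAdj {V : Type*} (E : V → V → Prop) (x y : V) : Prop :=
  E x y ∧ ¬ Dispensable E x y

/-- A digraph is thin if distinct vertices have distinct closed out-neighborhoods or
distinct closed in-neighborhoods. -/
def Thin {V : Type*} (E : V → V → Prop) : Prop :=
  ∀ x y : V, Nout E x = Nout E y → Nin E x = Nin E y → x = y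

/-- Measure used for the induction: lexicographic in (complement of intersection, union). -/
noncomputable def mes {V : Type*} [Fintype V] (E : V → V → Prop) (x y : V) : ℕ :=
  (Nin E x ∩ Nin E y)ᶜ.ncard * (Fintype.card V + 1) + (Nin E x ∪ Nin E y).ncard

lemma ncard_le_cardV {V : Type*} [Fintype V] (s : Set V) : s.ncard ≤ Fintype.card V := by
  simpa [Set.ncard_univ] using Set.ncard_le_ncard (Set.subset_univ s) Set.finite_univ

lemma mes_lt_of_inter {V : Type*} [Fintype V] (E : V → V → Prop) {x y x' y' : V}
    (h : Nin E x ∩ Nin E y ⊂ Nin E x' ∩ Nin E y') : mes E x' y' < mes E x y := by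
  have h1 : ((Nin E x' ∩ Nin E y')ᶜ).ncard < ((Nin E x ∩ Nin E y)ᶜ).ncard :=
    Set.ncard_lt_ncard (compl_lt_compl_iff_lt.mpr h) (Set.toFinite _)
  have h2 : (Nin E x' ∪ Nin E y').ncard ≤ Fintype.card V := ncard_le_cardV _
  have h3 : 0 ≤ (Nin E x ∪ Nin E y).ncard := Nat.zero_le _
  unfold mes
  nlinarith [h1, h2, h3]

lemma mes_lt_of_union {V : Type*} [Fintype V] (E : V → V → Prop) {x y x' y' : V}
    (h : Nin E x' ∩ Nin E y' = Nin E x ∩ Nin E y)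
    (hu : (Nin E x' ∪ Nin E y').ncard < (Nin E x ∪ Nin E y).ncard) :
    mes E x' y' < mes E x y := by
  unfold mes
  rw [h]
  exact Nat.add_lt_add_left hu _

lemma noNCond_of_eq {V : Type*} {N : V → Set V} {x y z : V} (h : N x = N y) :
    ¬ NCond N x y z := by
  rintro (⟨h1, h2⟩ | ⟨h1, h2⟩ | ⟨h1, h2⟩)
  · exact ssubset_irrefl (N x) (h ▸ h1.trans h2)
  · exact ssubset_irrefl (N x) ((h.symm ▸ h1 : N x ⊂ N z).trans h2)
  · rw [h, Set.inter_self] at h1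
    exact ssubset_irrefl (N y) (h1.trans_subset Set.inter_subset_left)

lemma NCond3_symm {V : Type*} {N : V → Set V} {x y z : V} (h : NCond3 N x y z) :
    NCond3 N y x z := by
  obtain ⟨h1, h2⟩ := h
  constructor
  · rw [Set.inter_comm (N y) (N x)]; exact h2
  · rw [Set.inter_comm (N y) (N x)]; exact h1

lemma NCond_symm {V : Type*} {N : V → Set V} {x y z : V} (h : NCond N x y z) :
    NCond N y x z := by
  rcases h with h | h | h
  · exact Or.inr (Or.inl h)
  · exact Or.inl h
  · exact Or.inr (Or.inr (NCond3_symm h))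

lemma WeakNCond_symm {V : Type*} {N : V → Set V} {x y z : V} (h : WeakNCond N x y z) :
    WeakNCond N y x z := by
  obtain ⟨h1, h2⟩ := h
  constructor
  · rw [Set.inter_comm (N y) (N x)]; exact h2
  · rw [Set.inter_comm (N y) (N x)]; exact h1

lemma disp_flip {V : Type*} {E : V → V → Prop} {a b : V} (h : Dispensable E b a) :
    Dispensable (flip E) a b := by
  have hout : Nout (flip E) = Nin E := rfl
  have hin : Nin (flip E) = Nout E := rfl
  rcases h with ⟨z, h1, h2⟩ | ⟨z₁, z₂, h1, h2⟩ | ⟨z, h1, h2⟩ | ⟨z, h1, h2⟩ |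
      ⟨z₁, z₂, hne, hz1b, hz1a, hz2b, hz2a, e1, e2, e3, e4⟩
  · exact Or.inl ⟨z, by rw [hout]; exact NCond_symm h2, by rw [hin]; exact NCond_symm h1⟩
  · refine Or.inr (Or.inl ⟨z₂, z₁, ?_, ?_⟩)
    · exact ⟨by rw [hout]; exact NCond3_symm h2.1, by rw [hin]; exact WeakNCond_symm h2.2⟩
    · exact ⟨by rw [hin]; exact NCond3_symm h1.1, by rw [hout]; exact WeakNCond_symm h1.2⟩
  · refine Or.inr (Or.inr (Or.inr (Or.inl ⟨z, ?_, ?_⟩)))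
    · rw [hin]; exact NCond_symm h1
    · rw [hout]; exact Or.symm h2
  · refine Or.inr (Or.inr (Or.inl ⟨z, ?_, ?_⟩))
    · rw [hout]; exact NCond_symm h1
    · rw [hin]; exact Or.symm h2
  · refine Or.inr (Or.inr (Or.inr (Or.inr ⟨z₁, z₂, hne, hz1a, hz1b, hz2a, hz2b, ?_, ?_, ?_, ?_⟩)))
    · rw [hout]; exact e3.symm
    · rw [hin]; exact e4.symm
    · rw [hin]; exact e1.symm
    · rw [hout]; exact e2.symm

lemma main_out {V : Type*} [Fintype V] (E : V → V → Prop) (hthin : Thin E) :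
    ∀ x y : V, Nout E x = Nout E y →
      Relation.ReflTransGen (fun a b => SkelAdj E a b ∨ SkelAdj E b a) x y := by
  suffices h : ∀ n : ℕ, ∀ x y : V, mes E x y ≤ n → Nout E x = Nout E y →
      Relation.ReflTransGen (fun a b => SkelAdj E a b ∨ SkelAdj E b a) x y by
    intro x y hxy; exact h (mes E x y) x y le_rfl hxy
  intro n
  induction n using Nat.strong_induction_on with
  | _ n ih =>
    intro x y hn hxy
    rcases eq_or_ne x y with rfl | hne
    · exact Relation.ReflTransGen.refl
    have hymem : y ∈ Nout E x := by
      rw [hxy]; exact Set.mem_insert y _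
    have hExy : E x y := by
      rcases hymem with h | h
      · exact absurd h hne.symm
      · exact h
    by_cases hd : Dispensable E x y
    · -- dispensable: must be D4 (D5 impossible, D1–D3 impossible)
      have hno : ∀ z, ¬ NCond (Nout E) x y z := fun z => noNCond_of_eq hxy
      rcases hd with ⟨z, h1, _⟩ | ⟨z₁, _, ⟨h1, _⟩, _⟩ | ⟨z, h1, _⟩ | ⟨z, h1, h2⟩ |
          ⟨z₁, z₂, hne12, hz1x, hz1y, hz2x, hz2y, e1, e2, e3, e4⟩
      · exact absurd h1 (hno z)
      · exact absurd (Or.inr (Or.inr h1) : NCond (Nout E) x y z₁) (hno z₁)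
      · exact absurd h1 (hno z)
      · -- D4
        have hzx : Nout E x = Nout E z := by
          rcases h2 with h | h
          · exact h
          · exact hxy.trans h
        have hzy : Nout E z = Nout E y := hzx.symm.trans hxy
        -- helper to apply the IH
        have step : ∀ a b : V, mes E a b < mes E x y → Nout E a = Nout E b →
            Relation.ReflTransGen (fun a b => SkelAdj E a b ∨ SkelAdj E b a) a b := by
          intro a b hlt hab
          exact ih (mes E a b) (lt_of_lt_of_le hlt hn) a b le_rfl hab
        rcases h1 with ⟨h3, h4⟩ | ⟨h3, h4⟩ | ⟨h3, h4⟩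
        · -- Nin x ⊂ Nin z ⊂ Nin y
          have hxsuby : Nin E x ⊆ Nin E y := (h3.trans h4).subset
          have hxz : mes E x z < mes E x y := by
            apply mes_lt_of_union
            · rw [Set.inter_eq_left.mpr h3.subset, Set.inter_eq_left.mpr hxsuby]
            · rw [Set.union_eq_right.mpr h3.subset, Set.union_eq_right.mpr hxsuby]
              exact Set.ncard_lt_ncard h4 (Set.toFinite _)
          have hzy : mes E z y < mes E x y := by
            apply mes_lt_of_inter
            rw [Set.inter_eq_left.mpr hxsuby, Set.inter_eq_left.mpr h4.subset]
            exact h3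
          exact (step x z hxz hzx).trans (step z y hzy (hzx.symm.trans hxy))
        · -- Nin y ⊂ Nin z ⊂ Nin x
          have hysubx : Nin E y ⊆ Nin E x := (h3.trans h4).subset
          have hxz : mes E x z < mes E x y := by
            apply mes_lt_of_inter
            rw [Set.inter_eq_right.mpr hysubx, Set.inter_eq_right.mpr h4.subset]
            exact h3
          have hzy' : mes E z y < mes E x y := by
            apply mes_lt_of_union
            · rw [Set.inter_eq_right.mpr h3.subset, Set.inter_eq_right.mpr hysubx]
            · rw [Set.union_eq_left.mpr h3.subset, Set.union_eq_left.mpr hysubx]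
              exact Set.ncard_lt_ncard h4 (Set.toFinite _)
          exact (step x z hxz hzx).trans (step z y hzy' (hzx.symm.trans hxy))
        · -- NCond3 for Nin
          have hxz : mes E x z < mes E x y := mes_lt_of_inter E h3
          have hzy' : mes E z y < mes E x y := by
            apply mes_lt_of_inter
            rw [Set.inter_comm (Nin E z) (Nin E y)]
            exact h4
          exact (step x z hxz hzx).trans (step z y hzy' (hzx.symm.trans hxy))
      · -- D5 impossible by thinness
        have : z₁ = y := hthin z₁ y (e1.symm.trans hxy) e3
        exact absurd this hz1y
    · exact Relation.ReflTransGen.single (Or.inl ⟨hExy, hd⟩)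

/-- In a thin connected finite digraph `G`, any two vertices of `S⁺(v)` are joined by a
walk in the underlying undirected graph of the Cartesian skeleton `𝕊(G)`; the same holds
for `S⁻(v)`. -/
theorem Sclasses_in_same_skeleton_component {V : Type*} [Fintype V]
    (E : V → V → Prop) (hirr : Irreflexive E) (hthin : Thin E)
    (hconn : ∀ x y : V, Relation.ReflTransGen (fun a b => E a b ∨ E b a) x y)
    (v x y : V) :
    (Nout E x = Nout E v → Nout E y = Nout E v →
      Relation.ReflTransGen (fun a b => SkelAdj E a b ∨ SkelAdj E b a) x y) ∧
    (Nin E x = Nin E v → Nin E y = Nin E v →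
      Relation.ReflTransGen (fun a b => SkelAdj E a b ∨ SkelAdj E b a) x y) := by

  constructor
  · intro hx hy
    exact main_out E hthin x y (hx.trans hy.symm)
  · intro hx hy
    have hthin' : Thin (flip E) := by
      intro a b h1 h2
      exact hthin a b h2 h1
    have hflip : Nout (flip E) x = Nout (flip E) y := hx.trans hy.symm
    have h := main_out (flip E) hthin' x y hflip
    refine Relation.ReflTransGen.mono ?_ x y h
    intro a b hab
    rcases hab with ⟨h1, h2⟩ | ⟨h1, h2⟩
    · exact Or.inr ⟨h1, fun hd => h2 (disp_flip hd)⟩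
    · exact Or.inl ⟨h1, fun hd => h2 (disp_flip hd)⟩
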